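/- Suppose Q ∈ M(d,ℂ) is self-adjoint, Q ≠ 0, and V : [0,T] → M(d,ℂ) takes values in unitary matrices with V(0) = 1, and ∫₀ᵀ V(s)* Q V(s) ds = 0. Then max_{0 ≤ t ≤ T} ‖V(t) - 1‖ ≥ √2 - 1. -/

import Mathlib

open scoped Matrix.Norms.L2Operator
open Matrix
set_option maxHeartbeats 1000000 in

theorem stmt4 {d : ℕ} {T : ℝ} (hT : 0 < T)
    (Q : Matrix (Fin d) (Fin d) ℂ) (hQ : Qᴴ = Q) (hQne : Q ≠ 0)
    (V : ℝ → Matrix (Fin d) (Fin d) ℂ)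
    (hVcont : ContinuousOn V (Set.Icc 0 T))
    (hVunit : ∀ t ∈ Set.Icc (0:ℝ) T, V t ∈ Matrix.unitaryGroup (Fin d) ℂ)
    (hV0 : V 0 = 1)
    (hint : ∫ s in (0:ℝ)..T, (V s)ᴴ * Q * V s = 0) :
    ∃ t ∈ Set.Icc (0:ℝ) T, Real.sqrt 2 - 1 ≤ ‖V t - 1‖ := by
  by_contra hcon
  push_neg at hcon
  -- sup of ‖V t - 1‖ attained
  have hne : (Set.Icc (0:ℝ) T).Nonempty := Set.nonempty_Icc.2 hT.le
  have hcontE : ContinuousOn (fun t => ‖V t - 1‖) (Set.Icc 0 T) :=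
    (hVcont.sub continuousOn_const).norm
  obtain ⟨t₀, ht₀, hmax⟩ := isCompact_Icc.exists_isMaxOn hne hcontE
  set ε := ‖V t₀ - 1‖ with hε
  have hε0 : 0 ≤ ε := norm_nonneg _
  have hεlt : ε < Real.sqrt 2 - 1 := hcon t₀ ht₀
  set c := 2 * ε + ε ^ 2 with hc
  have hs2 : Real.sqrt 2 ^ 2 = 2 := Real.sq_sqrt (by norm_num)
  have hc1 : c < 1 := by nlinarith [Real.sqrt_nonneg 2]
  have hc0 : 0 ≤ c := by positivity
  have hQpos : 0 < ‖Q‖ := norm_pos_iff.2 hQne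
  -- pointwise bound
  have hbound : ∀ s ∈ Set.Icc (0:ℝ) T, ‖(V s)ᴴ * Q * V s - Q‖ ≤ c * ‖Q‖ := by
    intro s hs
    have hEs : ‖V s - 1‖ ≤ ε := hmax hs
    set E := V s - 1 with hE
    have hVs : V s = 1 + E := by simp [hE]
    have hexp : (V s)ᴴ * Q * V s - Q = Eᴴ * Q + Q * E + Eᴴ * Q * E := by
      rw [hVs]
      simp [conjTranspose_add, add_mul, mul_add, Matrix.mul_one, Matrix.one_mul]
      noncomm_ring
    rw [hexp]
    have h1 : ‖Eᴴ * Q‖ ≤ ε * ‖Q‖ := by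
      calc ‖Eᴴ * Q‖ ≤ ‖Eᴴ‖ * ‖Q‖ := norm_mul_le _ _
        _ ≤ ε * ‖Q‖ := by rw [Matrix.l2_opNorm_conjTranspose]; exact mul_le_mul_of_nonneg_right hEs (norm_nonneg _)
    have h2 : ‖Q * E‖ ≤ ‖Q‖ * ε := by
      calc ‖Q * E‖ ≤ ‖Q‖ * ‖E‖ := norm_mul_le _ _
        _ ≤ ‖Q‖ * ε := mul_le_mul_of_nonneg_left hEs (norm_nonneg _)
    have h3 : ‖Eᴴ * Q * E‖ ≤ ε * ‖Q‖ * ε := by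
      calc ‖Eᴴ * Q * E‖ ≤ ‖Eᴴ * Q‖ * ‖E‖ := norm_mul_le _ _
        _ ≤ ε * ‖Q‖ * ε := mul_le_mul h1 hEs (norm_nonneg _) (by positivity)
    calc ‖Eᴴ * Q + Q * E + Eᴴ * Q * E‖ ≤ ‖Eᴴ * Q + Q * E‖ + ‖Eᴴ * Q * E‖ := norm_add_le _ _
      _ ≤ (‖Eᴴ * Q‖ + ‖Q * E‖) + ‖Eᴴ * Q * E‖ := by gcongr; exact norm_add_le _ _
      _ ≤ (ε * ‖Q‖ + ‖Q‖ * ε) + ε * ‖Q‖ * ε := by gcongr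
      _ = c * ‖Q‖ := by rw [hc]; ring
  -- integrability
  have hIcc : Set.uIcc (0:ℝ) T = Set.Icc 0 T := Set.uIcc_of_le hT.le
  have hcontF : ContinuousOn (fun s => (V s)ᴴ * Q * V s) (Set.Icc 0 T) := by
    have hVH : ContinuousOn (fun s => (V s)ᴴ) (Set.Icc 0 T) := by
      have : Isometry (fun A : Matrix (Fin d) (Fin d) ℂ => Aᴴ) := by
        intro A B
        simp only [edist_dist, dist_eq_norm, ← Matrix.conjTranspose_sub]
        rw [Matrix.l2_opNorm_conjTranspose]
      exact this.continuous.comp_continuousOn hVcont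
    exact (hVH.mul continuousOn_const).mul hVcont
  have hInt : IntervalIntegrable (fun s => (V s)ᴴ * Q * V s) MeasureTheory.volume 0 T :=
    ContinuousOn.intervalIntegrable (by rwa [hIcc])
  have hIntQ : IntervalIntegrable (fun _ : ℝ => Q) MeasureTheory.volume 0 T :=
    intervalIntegrable_const
  have hval : (∫ s in (0:ℝ)..T, ((V s)ᴴ * Q * V s - Q)) = -(T • Q) := by
    rw [intervalIntegral.integral_sub hInt hIntQ, hint, intervalIntegral.integral_const]
    simp
  have hnorm1 : ‖∫ s in (0:ℝ)..T, ((V s)ᴴ * Q * V s - Q)‖ = T * ‖Q‖ := by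
    rw [hval, norm_neg, norm_smul, Real.norm_of_nonneg hT.le]
  have hnorm2 : ‖∫ s in (0:ℝ)..T, ((V s)ᴴ * Q * V s - Q)‖ ≤ c * ‖Q‖ * |T - 0| := by
    apply intervalIntegral.norm_integral_le_of_norm_le_const
    intro s hs
    rw [Set.uIoc_of_le hT.le] at hs
    exact hbound s ⟨hs.1.le, hs.2⟩
  rw [hnorm1, abs_of_nonneg (by linarith), sub_zero] at hnorm2
  nlinarith [mul_pos (sub_pos.2 hc1) (mul_pos hQpos hT)]
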